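/- For any even integer d ≥ 0 and indices 1 ≤ i < j ≤ n, the CHS polynomials satisfy (xᵢ − xⱼ)·(∂/∂xᵢ − ∂/∂xⱼ) h_d(x₁,…,xₙ) = (xᵢ − xⱼ)²·h_{d−2}(x₁,…,xₙ, xᵢ, xⱼ), where h_{d−2} is taken in n+2 variables. -/

import Mathlib

open MvPolynomial

/-- The complete homogeneous symmetric polynomial of degree `d` in `n` variables,
as a multivariate polynomial. -/
noncomputable def chsPoly (n d : ℕ) : MvPolynomial (Fin n) ℝ :=
  ∑ f ∈ Finset.univ.filter (fun f : Fin d → Fin n => ∀ i j : Fin d, i ≤ j → f i ≤ f j),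
    ∏ i, MvPolynomial.X (f i)

section Aux

open Finset

private lemma ofFn_get_cast {α : Type*} {d : ℕ} (l : List α) (h : l.length = d) :
    List.ofFn (fun k => l.get (Fin.cast h.symm k)) = l := by
  subst h; exact List.ofFn_get l

private theorem chsPoly_eq_hsymm (n d : ℕ) : chsPoly n d = hsymm (Fin n) ℝ d := by
  rw [chsPoly, hsymm]
  refine Finset.sum_bij (fun f hf => (⟨(List.ofFn f : Multiset (Fin n)), by simp⟩ : Sym (Fin n) d))
      (fun _ _ => Finset.mem_univ _) ?_ ?_ ?_
  · intro f hf g hg h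
    simp only [Finset.mem_filter, Finset.mem_univ, true_and] at hf hg
    have hf' : Monotone f := fun a b hab => hf a b hab
    have hg' : Monotone g := fun a b hab => hg a b hab
    have : (List.ofFn f) = (List.ofFn g) := by
      refine List.Perm.eq_of_pairwise' (r := (· ≤ ·))
        (List.sortedLE_ofFn_iff.mpr hf').pairwise (List.sortedLE_ofFn_iff.mpr hg').pairwise
        (Multiset.coe_eq_coe.mp ?_)
      simpa using congrArg (fun x : Sym (Fin n) d => x.1) h
    exact List.ofFn_injective this
  · rintro ⟨s, hs⟩ -
    set l := Multiset.sort s (· ≤ ·) with hl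
    have hlen : l.length = d := by rw [hl, Multiset.length_sort, hs]
    refine ⟨fun k => l.get (Fin.cast hlen.symm k), ?_, ?_⟩
    · simp only [Finset.mem_filter, Finset.mem_univ, true_and]
      intro a b hab
      exact (Multiset.pairwise_sort (s := s) (r := (· ≤ ·))).rel_get_of_le (by simpa using hab)
    · apply Subtype.ext
      show ((List.ofFn _ : List (Fin n)) : Multiset (Fin n)) = s
      rw [ofFn_get_cast l hlen, hl, Multiset.sort_eq]
  · intro f hf
    show ∏ i, X (f i) = (Multiset.map X (List.ofFn f : Multiset (Fin n))).prod
    rw [Multiset.map_coe, Multiset.prod_coe, List.map_ofFn, Fin.prod_ofFn]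
    rfl

variable {σ : Type*} [Fintype σ] [DecidableEq σ]

omit [Fintype σ] in
private lemma multiset_option_decomp (M : Multiset (Option σ)) :
    M = Multiset.replicate (M.count none) none + (M.filterMap id).map some := by
  induction M using Multiset.induction_on with
  | empty => simp
  | cons a M ih =>
    cases a with
    | none =>
      rw [Multiset.count_cons_self, Multiset.replicate_succ,
        Multiset.filterMap_cons_none _ _ rfl, Multiset.cons_add, ← ih]
    | some x =>
      rw [Multiset.count_cons_of_ne (by simp), Multiset.filterMap_cons_some (f := id) _ _ rfl,
        Multiset.map_cons, Multiset.add_cons, ← ih]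

omit [Fintype σ] [DecidableEq σ] in
private lemma filterMap_id_replicate_add (k : ℕ) (t : Multiset (Option σ)) :
    (Multiset.replicate k (none : Option σ) + t).filterMap id = t.filterMap id := by
  induction k with
  | zero => simp
  | succ k ih =>
    rw [Multiset.replicate_succ, Multiset.cons_add, Multiset.filterMap_cons_none _ _ rfl, ih]

omit [Fintype σ] in
private lemma card_filterMap_id {e k : ℕ} (M : Sym (Option σ) e) (hM : M.1.count none = k) :
    Multiset.card (M.1.filterMap id) = e - k := by
  have := congrArg Multiset.card (multiset_option_decomp M.1)
  simp only [Multiset.card_add, Multiset.card_replicate, Multiset.card_map, M.2, hM] at this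
  omega

private lemma hsymm_option (e : ℕ) :
    hsymm (Option σ) ℝ e =
      ∑ k ∈ range (e + 1), (X none) ^ k * rename some (hsymm σ ℝ (e - k)) := by
  rw [hsymm]
  rw [← Finset.sum_fiberwise_of_maps_to (g := fun M : Sym (Option σ) e => M.1.count none)
      (fun M _ => mem_range.mpr (Nat.lt_succ_of_le
        (le_of_le_of_eq (Multiset.count_le_card _ _) M.2)))]
  refine Finset.sum_congr rfl fun k hk => ?_
  have hke : k ≤ e := Nat.lt_succ_iff.mp (mem_range.mp hk)
  rw [hsymm, map_sum, Finset.mul_sum]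
  refine Finset.sum_bij'
    (i := fun M hM => (⟨M.1.filterMap id,
      card_filterMap_id M (Finset.mem_filter.mp hM).2⟩ : Sym σ (e - k)))
    (j := fun m _ => (⟨Multiset.replicate k none + m.1.map some,
      by simp [m.2, Nat.add_sub_cancel' hke]⟩ : Sym (Option σ) e))
    (fun _ _ => mem_univ _) ?_ ?_ ?_ ?_
  · intro m hm
    refine Finset.mem_filter.mpr ⟨mem_univ _, ?_⟩
    show Multiset.count none (Multiset.replicate k none + m.1.map some) = k
    rw [Multiset.count_add, Multiset.count_replicate_self,
      Multiset.count_eq_zero.mpr (by simp), add_zero]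
  · intro M hM
    simp only [mem_filter, mem_univ, true_and] at hM
    apply Subtype.ext
    show Multiset.replicate k none + (M.1.filterMap id).map some = M.1
    rw [← hM]; exact (multiset_option_decomp M.1).symm
  · intro m hm
    apply Subtype.ext
    show (Multiset.replicate k none + m.1.map some).filterMap id = m.1
    rw [filterMap_id_replicate_add, Multiset.filterMap_map, Function.id_comp,
      Multiset.filterMap_some]
  · intro M hM
    simp only [mem_filter, mem_univ, true_and] at hM
    conv_lhs => rw [multiset_option_decomp M.1, hM]
    rw [Multiset.map_add, Multiset.prod_add, Multiset.map_replicate, Multiset.prod_replicate,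
      Multiset.map_map]
    congr 1
    show _ = rename some ((Multiset.map X (M.1.filterMap id)).prod)
    rw [map_multiset_prod, Multiset.map_map]
    exact congrArg Multiset.prod (Multiset.map_congr rfl fun a _ => (rename_X _ _).symm)

private lemma pderiv_rename_ne {σ' τ : Type*} [DecidableEq τ] (f : σ' → τ) (i : τ)
    (hf : ∀ a, f a ≠ i) (p : MvPolynomial σ' ℝ) : pderiv i (rename f p) = 0 := by
  induction p using MvPolynomial.induction_on with
  | C a => simp
  | add p q hp hq => simp [hp, hq]
  | mul_X p s hp => simp [hp, pderiv_X_of_ne (hf s)]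

private lemma hsymm_pull (n m : ℕ) (i : Fin n) :
    hsymm (Fin n) ℝ m = ∑ k ∈ range (m + 1),
      (X i) ^ k * rename (Subtype.val : {b : Fin n // b ≠ i} → Fin n)
        (hsymm {b : Fin n // b ≠ i} ℝ (m - k)) := by
  rw [← rename_hsymm _ ℝ m (Equiv.optionSubtypeNe i), hsymm_option, map_sum]
  refine Finset.sum_congr rfl fun k _ => ?_
  rw [map_mul, map_pow, rename_X, rename_rename, Equiv.optionSubtypeNe_none]
  rfl

private lemma pderiv_hsymm (n d : ℕ) (i : Fin n) :
    pderiv i (hsymm (Fin n) ℝ d) = ∑ k ∈ range d, (X i) ^ k * hsymm (Fin n) ℝ (d - 1 - k) := by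
  set R : ℕ → MvPolynomial (Fin n) ℝ := fun q =>
    rename (Subtype.val : {b : Fin n // b ≠ i} → Fin n) (hsymm {b : Fin n // b ≠ i} ℝ q) with hR
  set F : ℕ → MvPolynomial (Fin n) ℝ := fun m => (X i) ^ m * R (d - 1 - m) with hF
  have hval : ∀ a : {b : Fin n // b ≠ i}, (a : Fin n) ≠ i := fun a => a.2
  have lhs_eq : pderiv i (hsymm (Fin n) ℝ d) = ∑ k ∈ range d, (k + 1) • F k := by
    rw [hsymm_pull n d i, map_sum, Finset.sum_range_succ']
    have term : ∀ k, pderiv i ((X i) ^ k * R (d - k)) =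
        k • ((X i) ^ (k - 1) * R (d - k)) := by
      intro k
      rw [pderiv_mul, pderiv_rename_ne _ _ hval, mul_zero, add_zero,
        Derivation.leibniz_pow, pderiv_X_self, smul_eq_mul, mul_one, smul_mul_assoc]
    change ∑ k ∈ range d, pderiv i ((X i) ^ (k + 1) * R (d - (k + 1)))
      + pderiv i ((X i) ^ 0 * R (d - 0)) = _
    simp only [term]
    rw [zero_smul, add_zero]
    refine Finset.sum_congr rfl fun k _ => ?_
    have h1 : d - (k + 1) = d - 1 - k := by omega
    simp only [hF, Nat.add_sub_cancel, h1]
  rw [lhs_eq]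
  have rhs_eq : ∀ k ∈ range d, (X i) ^ k * hsymm (Fin n) ℝ (d - 1 - k) =
      ∑ m ∈ Ico k d, F m := by
    intro k hk
    have hkd : k < d := mem_range.mp hk
    rw [hsymm_pull n (d - 1 - k) i, Finset.mul_sum, Finset.sum_Ico_eq_sum_range]
    have : d - 1 - k + 1 = d - k := by omega
    rw [this]
    refine Finset.sum_congr rfl fun l hl => ?_
    have h1 : d - 1 - k - l = d - 1 - (k + l) := by omega
    simp only [hF, hR, ← mul_assoc, ← pow_add, h1]
  rw [Finset.sum_congr rfl rhs_eq]
  refine Eq.symm ?_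
  have ico_filter : ∀ k, Ico k d = (range d).filter (fun m => k ≤ m) := by
    intro k; ext m; simp [Finset.mem_Ico, Finset.mem_filter]; omega
  calc ∑ k ∈ range d, ∑ m ∈ Ico k d, F m
      = ∑ k ∈ range d, ∑ m ∈ range d, if k ≤ m then F m else 0 := by
        refine Finset.sum_congr rfl fun k _ => ?_
        rw [ico_filter k, Finset.sum_filter]
    _ = ∑ m ∈ range d, ∑ k ∈ range d, if k ≤ m then F m else 0 := Finset.sum_comm
    _ = ∑ m ∈ range d, (m + 1) • F m := by
        refine Finset.sum_congr rfl fun m hm => ?_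
        rw [← Finset.sum_filter]
        have : (range d).filter (fun k => k ≤ m) = range (m + 1) := by
          ext k
          simp only [Finset.mem_filter, Finset.mem_range]
          have := mem_range.mp hm; omega
        rw [this, Finset.sum_const, Finset.card_range]

end Aux

/-- `(xᵢ - xⱼ)(∂ᵢ - ∂ⱼ) h_d(x₁,…,xₙ) = (xᵢ - xⱼ)² h_{d-2}(x₁,…,xₙ,xᵢ,xⱼ)`. -/
theorem chs_derivation_identity (n d : ℕ) (hd : Even d) (hd2 : 2 ≤ d)
    (i j : Fin n) (hij : i < j) :
    (X i - X j) * (pderiv i (chsPoly n d) - pderiv j (chsPoly n d)) =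
      (X i - X j) ^ 2 *
        aeval (fun k : Fin (n + 2) =>
            if h : (k : ℕ) < n then (X (⟨k, h⟩ : Fin n) : MvPolynomial (Fin n) ℝ)
            else if (k : ℕ) = n then X i else X j)
          (chsPoly (n + 2) (d - 2)) := by
  classical
  set v : Fin (n + 2) → MvPolynomial (Fin n) ℝ := fun k =>
    if h : (k : ℕ) < n then (X (⟨k, h⟩ : Fin n) : MvPolynomial (Fin n) ℝ)
    else if (k : ℕ) = n then X i else X j with hv
  obtain ⟨e, rfl⟩ : ∃ e, d = e + 2 := ⟨d - 2, by omega⟩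
  have hsub : e + 2 - 2 = e := by omega
  rw [hsub, chsPoly_eq_hsymm, chsPoly_eq_hsymm]
  set ε : Option (Option (Fin n)) ≃ Fin (n + 2) :=
    ((finSuccEquivLast (n := n + 1)).trans
      (Equiv.optionCongr (finSuccEquivLast (n := n)))).symm with hε
  have hε_none : ε none = Fin.last (n + 1) := by simp [hε, ← Equiv.optionCongr_symm]
  have hε_some_none : ε (some none) = Fin.castSucc (Fin.last n) := by simp [hε, ← Equiv.optionCongr_symm]
  have hε_some_some : ∀ a : Fin n, ε (some (some a)) = Fin.castSucc (Fin.castSucc a) := by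
    intro a; simp [hε, ← Equiv.optionCongr_symm]
  have hv_none : v (ε none) = X j := by
    simp only [hε_none, hv, Fin.val_last]
    rw [dif_neg (by omega), if_neg (by omega)]
  have hv_some_none : v (ε (some none)) = X i := by
    simp only [hε_some_none, hv, Fin.coe_castSucc, Fin.val_last]
    rw [dif_neg (by omega)]
    simp
  have hv_some_some : ∀ a : Fin n, v (ε (some (some a))) = X a := by
    intro a
    simp only [hε_some_some a, hv, Fin.coe_castSucc]
    rw [dif_pos a.isLt]
  -- compute the substituted polynomial
  have hA : aeval v (hsymm (Fin (n + 2)) ℝ e) =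
      ∑ q ∈ Finset.range (e + 1), ∑ p ∈ Finset.range (e - q + 1),
        (X j) ^ q * ((X i) ^ p * hsymm (Fin n) ℝ (e - q - p)) := by
    rw [← rename_hsymm _ ℝ e ε, aeval_rename, hsymm_option, map_sum]
    refine Finset.sum_congr rfl fun q hq => ?_
    rw [map_mul, map_pow, aeval_X, Function.comp_apply, hv_none, aeval_rename, hsymm_option,
      map_sum, Finset.mul_sum]
    refine Finset.sum_congr rfl fun p hp => ?_
    rw [map_mul, map_pow, aeval_X, Function.comp_apply, Function.comp_apply, hv_some_none,
      aeval_rename]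
    have hfun : ((v ∘ ⇑ε) ∘ some) ∘ some = X := funext fun a => hv_some_some a
    rw [hfun, aeval_X_left_apply]
  rw [hA, pderiv_hsymm, pderiv_hsymm]
  have geo : ∀ m : ℕ, (X i ^ m - X j ^ m : MvPolynomial (Fin n) ℝ)
      = (∑ p ∈ Finset.range m, X i ^ p * X j ^ (m - 1 - p)) * (X i - X j) :=
    fun m => (geom_sum₂_mul _ _ m).symm
  have key : ∑ m ∈ Finset.range (e + 2),
        (X i ^ m - X j ^ m) * hsymm (Fin n) ℝ (e + 2 - 1 - m)
      = (X i - X j) * ∑ q ∈ Finset.range (e + 1), ∑ p ∈ Finset.range (e - q + 1),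
          (X j) ^ q * ((X i) ^ p * hsymm (Fin n) ℝ (e - q - p)) := by
    calc ∑ m ∈ Finset.range (e + 2), (X i ^ m - X j ^ m) * hsymm (Fin n) ℝ (e + 2 - 1 - m)
        = ∑ m ∈ Finset.range (e + 2), ∑ p ∈ Finset.range m,
            X i ^ p * X j ^ (m - 1 - p) * (X i - X j) * hsymm (Fin n) ℝ (e + 2 - 1 - m) := by
          refine Finset.sum_congr rfl fun m _ => ?_
          rw [geo m, Finset.sum_mul, Finset.sum_mul]
      _ = ∑ x ∈ (Finset.range (e + 2)).sigma (fun m => Finset.range m),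
            X i ^ x.2 * X j ^ (x.1 - 1 - x.2) * (X i - X j)
              * hsymm (Fin n) ℝ (e + 2 - 1 - x.1) :=
          Finset.sum_sigma' _ _ _
      _ = ∑ y ∈ (Finset.range (e + 1)).sigma (fun q => Finset.range (e - q + 1)),
            (X i - X j) * ((X j) ^ y.1 * ((X i) ^ y.2 * hsymm (Fin n) ℝ (e - y.1 - y.2))) := by
          refine Finset.sum_nbij' (i := fun x => ⟨x.1 - 1 - x.2, x.2⟩)
            (j := fun y => ⟨y.2 + y.1 + 1, y.2⟩) ?_ ?_ ?_ ?_ ?_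
          · rintro ⟨m, p⟩ hx
            dsimp only
            simp only [Finset.mem_sigma, Finset.mem_range] at hx ⊢
            omega
          · rintro ⟨q, p⟩ hy
            dsimp only
            simp only [Finset.mem_sigma, Finset.mem_range] at hy ⊢
            omega
          · rintro ⟨m, p⟩ hx
            dsimp only
            simp only [Finset.mem_sigma, Finset.mem_range] at hx
            exact Sigma.ext (by dsimp only; omega) (heq_of_eq rfl)
          · rintro ⟨q, p⟩ hy
            dsimp only
            simp only [Finset.mem_sigma, Finset.mem_range] at hy
            exact Sigma.ext (by dsimp only; omega) (heq_of_eq rfl)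
          · rintro ⟨m, p⟩ hx
            dsimp only
            simp only [Finset.mem_sigma, Finset.mem_range] at hx
            have harg : e - (m - 1 - p) - p = e + 2 - 1 - m := by omega
            rw [harg]
            ring
      _ = (X i - X j) * ∑ q ∈ Finset.range (e + 1), ∑ p ∈ Finset.range (e - q + 1),
            (X j) ^ q * ((X i) ^ p * hsymm (Fin n) ℝ (e - q - p)) := by
          rw [← Finset.mul_sum, Finset.sum_sigma]
  rw [← Finset.sum_sub_distrib]
  simp_rw [← sub_mul]
  rw [key]
  ring
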